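/- Let i, j > 0 with i + j = 1. If there exists a compact subset Ω of Bad(i,j) ⊆ ℝ² which supports a non-atomic finite measure m satisfying condition (A) with exponent δ > 1, then dim(Bad(i,j) ∩ Bad(1/2,1/2)) ≥ δ; in particular Bad(i,j) ∩ Bad(1/2,1/2) ≠ ∅. -/

import Mathlib

open scoped ENNReal
open MeasureTheory Metric

/-- The distance from a real number to the nearest integer. -/
noncomputable def distToNearestInt (y : ℝ) : ℝ := |y - (round y : ℝ)|

/-- For weights `i, j ≥ 0` with `i + j = 1`, the set `Bad(i,j)` of pairs
`(x₁, x₂) ∈ ℝ²` for which there exists `c > 0` such that for every integer `q ≥ 1` one has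
`max{‖q x₁‖^(1/i), ‖q x₂‖^(1/j)} > c / q`, the maximum being taken over the components with
positive weight (a component with weight `0` imposes no condition). -/
def badPair (i j : ℝ) : Set (Fin 2 → ℝ) :=
  {x | ∃ c : ℝ, 0 < c ∧ ∀ q : ℕ, 0 < q →
    (0 < i ∧ c / (q : ℝ) < distToNearestInt ((q : ℝ) * x 0) ^ (1 / i)) ∨
    (0 < j ∧ c / (q : ℝ) < distToNearestInt ((q : ℝ) * x 1) ^ (1 / j))}

open scoped NNReal

noncomputable section BPVaux

abbrev Pt := Fin 2 → ℝ

lemma dist_fin2 (x y : Pt) : dist x y = max (dist (x 0) (y 0)) (dist (x 1) (y 1)) := by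
  apply le_antisymm
  · have h0 : (0:ℝ) ≤ max (dist (x 0) (y 0)) (dist (x 1) (y 1)) :=
      le_trans dist_nonneg (le_max_left _ _)
    rw [dist_pi_le_iff h0]
    intro b
    fin_cases b
    · exact le_max_left _ _
    · exact le_max_right _ _
  · exact max_le (dist_le_pi_dist x y 0) (dist_le_pi_dist x y 1)

lemma exists_coord_dist (x y : Pt) : ∃ k : Fin 2, dist x y = dist (x k) (y k) := by
  rcases max_cases (dist (x 0) (y 0)) (dist (x 1) (y 1)) with ⟨h, _⟩ | ⟨h, _⟩
  · exact ⟨0, by rw [dist_fin2, h]⟩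
  · exact ⟨1, by rw [dist_fin2, h]⟩

/-- the rational point `p/q`. -/
def ratPt (p : Fin 2 → ℤ) (q : ℕ) : Pt := fun k => (p k : ℝ) / q

/-- determinant of differences of three rational points is `0` or at least `1/(q₁q₂q₃)`. -/
lemma det_ratPt_lower (pA pB pC : Fin 2 → ℤ) (qA qB qC : ℕ)
    (hA : 0 < qA) (hB : 0 < qB) (hC : 0 < qC)
    (hne : (ratPt pB qB 0 - ratPt pA qA 0) * (ratPt pC qC 1 - ratPt pA qA 1)
      - (ratPt pB qB 1 - ratPt pA qA 1) * (ratPt pC qC 0 - ratPt pA qA 0) ≠ 0) :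
    1 ≤ |(ratPt pB qB 0 - ratPt pA qA 0) * (ratPt pC qC 1 - ratPt pA qA 1)
      - (ratPt pB qB 1 - ratPt pA qA 1) * (ratPt pC qC 0 - ratPt pA qA 0)| * (qA * qB * qC) := by
  set D : ℝ := (ratPt pB qB 0 - ratPt pA qA 0) * (ratPt pC qC 1 - ratPt pA qA 1)
      - (ratPt pB qB 1 - ratPt pA qA 1) * (ratPt pC qC 0 - ratPt pA qA 0) with hD
  have hqA : (qA : ℝ) ≠ 0 := Nat.cast_ne_zero.2 hA.ne'
  have hqB : (qB : ℝ) ≠ 0 := Nat.cast_ne_zero.2 hB.ne'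
  have hqC : (qC : ℝ) ≠ 0 := Nat.cast_ne_zero.2 hC.ne'
  set M : ℤ := (qA : ℤ) * (pB 0 * pC 1 - pB 1 * pC 0)
      + (qB : ℤ) * (pC 0 * pA 1 - pC 1 * pA 0)
      + (qC : ℤ) * (pA 0 * pB 1 - pA 1 * pB 0) with hM
  have key : D * (qA * qB * qC) = (M : ℝ) := by
    rw [hD, hM]
    simp only [ratPt]
    push_cast
    field_simp
    ring
  have hMne : M ≠ 0 := by
    intro h
    apply hne
    have : D * (qA * qB * qC) = 0 := by rw [key, h]; simp
    rcases mul_eq_zero.1 this with h' | h'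
    · exact h'
    · exfalso; 
      have : (qA:ℝ) * qB * qC ≠ 0 := by positivity
      exact this h'
  have h1 : (1 : ℝ) ≤ |(M : ℝ)| := by
    have := Int.one_le_abs hMne
    exact_mod_cast this
  calc (1:ℝ) ≤ |(M : ℝ)| := h1
    _ = |D * (qA * qB * qC)| := by rw [key]
    _ = |D| * (qA * qB * qC) := by
        rw [abs_mul, abs_of_nonneg (by positivity : (0:ℝ) ≤ (qA:ℝ) * qB * qC)]

/-- upper bound of 2x2 determinant by sup norms -/
lemma det_upper (u v : Pt) (r : ℝ) (hu : ∀ k, |u k| ≤ r) (hv : ∀ k, |v k| ≤ r) :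
    |u 0 * v 1 - u 1 * v 0| ≤ 2 * r ^ 2 := by
  have hr : 0 ≤ r := le_trans (abs_nonneg _) (hu 0)
  have h1 : |u 0 * v 1| ≤ r ^ 2 := by
    rw [abs_mul, sq]
    exact mul_le_mul (hu 0) (hv 1) (abs_nonneg _) hr
  have h2 : |u 1 * v 0| ≤ r ^ 2 := by
    rw [abs_mul, sq]
    exact mul_le_mul (hu 1) (hv 0) (abs_nonneg _) hr
  calc |u 0 * v 1 - u 1 * v 0| ≤ |u 0 * v 1| + |u 1 * v 0| := abs_sub _ _
    _ ≤ 2 * r ^ 2 := by linarith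

/-- window lemma: powers of `R` chop `(R,∞)`. -/
lemma exists_pow_window {R : ℕ} (hR : 2 ≤ R) {X : ℝ} (hX : (R : ℝ) < X) :
    ∃ n : ℕ, (R : ℝ) ^ (n + 1) < X ∧ X ≤ (R : ℝ) ^ (n + 2) := by
  have hR1 : (1 : ℝ) < (R : ℝ) := by exact_mod_cast hR.trans_lt' one_lt_two
  obtain ⟨k, hk⟩ : ∃ k : ℕ, X ≤ (R : ℝ) ^ k := by
    obtain ⟨k, hk⟩ := pow_unbounded_of_one_lt X hR1
    exact ⟨k, hk.le⟩
  have h2 : ∃ k, X ≤ (R:ℝ) ^ (k + 2) := ⟨k, hk.trans (pow_le_pow_right₀ (le_of_lt hR1) (by omega))⟩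
  classical
  let n := Nat.find h2
  refine ⟨n, ?_, Nat.find_spec h2⟩
  rcases Nat.eq_zero_or_pos n with h0 | hpos
  · have h1 : (R:ℝ) ^ (0 + 1) < X := by simpa using hX
    rw [show n = 0 from h0]
    exact h1
  · have hlt := Nat.find_min h2 (m := n - 1) (by omega)
    push_neg at hlt
    have : n - 1 + 2 = n + 1 := by omega
    rwa [this] at hlt

end BPVaux


noncomputable section BPVdigits

/-- `k`-th digit of `u` in base `N` (as a natural number `< N`). -/
def dig (N : ℕ) (u : ℝ) (k : ℕ) : ℕ := (⌊u * (N:ℝ) ^ (k+1)⌋ % (N:ℤ)).toNat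

lemma dig_lt {N : ℕ} (hN : 0 < N) (u : ℝ) (k : ℕ) : dig N u k < N := by
  have hN' : (0:ℤ) < (N:ℤ) := by exact_mod_cast hN
  have hNz : (N:ℤ) ≠ 0 := by exact_mod_cast hN.ne'
  have h := Int.emod_nonneg (⌊u * (N:ℝ) ^ (k+1)⌋) hNz
  rw [dig, Int.toNat_lt h]
  exact Int.emod_lt_of_pos _ hN'

lemma measurable_dig (N : ℕ) (k : ℕ) : Measurable fun u : ℝ => dig N u k := by
  have h1 : Measurable fun u : ℝ => ⌊u * (N:ℝ) ^ (k+1)⌋ :=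
    Int.measurable_floor.comp (measurable_id.mul_const _)
  exact (measurable_of_countable (fun a : ℤ => (a % (N:ℤ)).toNat)).comp h1

lemma floor_step {N : ℕ} (hN : 0 < N) (u : ℝ) (k : ℕ) :
    ⌊u * (N:ℝ) ^ (k+1)⌋ = (N:ℤ) * ⌊u * (N:ℝ) ^ k⌋ + (dig N u k : ℤ) := by
  have hN' : (0:ℤ) < (N:ℤ) := by exact_mod_cast hN
  have hNR : (0:ℝ) < (N:ℝ) := by exact_mod_cast hN
  have hdiv : ⌊u * (N:ℝ) ^ (k+1)⌋ / (N:ℤ) = ⌊u * (N:ℝ) ^ k⌋ := by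
    have h1 : ⌊u * (N:ℝ) ^ k⌋ ≤ ⌊u * (N:ℝ) ^ (k+1)⌋ / (N:ℤ) := by
      rw [Int.le_ediv_iff_mul_le hN', Int.le_floor]
      push_cast
      calc (⌊u * (N:ℝ) ^ k⌋ : ℝ) * (N:ℝ) ≤ u * (N:ℝ) ^ k * (N:ℝ) := by
            have := Int.floor_le (u * (N:ℝ) ^ k)
            nlinarith
        _ = u * (N:ℝ) ^ (k+1) := by ring
    have h2 : ⌊u * (N:ℝ) ^ (k+1)⌋ / (N:ℤ) < ⌊u * (N:ℝ) ^ k⌋ + 1 := by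
      rw [Int.ediv_lt_iff_lt_mul hN', Int.floor_lt]
      push_cast
      have := Int.lt_floor_add_one (u * (N:ℝ) ^ k)
      calc u * (N:ℝ) ^ (k+1) = u * (N:ℝ) ^ k * (N:ℝ) := by ring
        _ < (⌊u * (N:ℝ) ^ k⌋ + 1) * (N:ℝ) := by nlinarith
    omega
  have hmod : (dig N u k : ℤ) = ⌊u * (N:ℝ) ^ (k+1)⌋ % (N:ℤ) := by
    have hNz : (N:ℤ) ≠ 0 := by exact_mod_cast hN.ne'
    rw [dig, Int.toNat_of_nonneg (Int.emod_nonneg _ hNz)]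
  rw [hmod, ← hdiv]
  exact (Int.mul_ediv_add_emod _ _).symm

lemma floor_eq_of_digs {N : ℕ} (hN : 0 < N) {u v : ℝ}
    (hu : u ∈ Set.Ico (0:ℝ) 1) (hv : v ∈ Set.Ico (0:ℝ) 1) :
    ∀ n : ℕ, (∀ k < n, dig N u k = dig N v k) →
      ⌊u * (N:ℝ) ^ n⌋ = ⌊v * (N:ℝ) ^ n⌋ := by
  intro n
  induction n with
  | zero =>
    intro _
    simp only [pow_zero, mul_one]
    rw [Int.floor_eq_zero_iff.2 (by exact ⟨hu.1, hu.2⟩), Int.floor_eq_zero_iff.2 ⟨hv.1, hv.2⟩]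
  | succ n ih =>
    intro h
    rw [floor_step hN u n, floor_step hN v n, ih (fun k hk => h k (by omega)), h n (by omega)]

lemma floor_fix_subset {N : ℕ} (hN : 0 < N) (n : ℕ) (j : ℤ) :
    {u : ℝ | u ∈ Set.Ico (0:ℝ) 1 ∧ ⌊u * (N:ℝ) ^ n⌋ = j} ⊆
      Set.Ico ((j:ℝ) / (N:ℝ) ^ n) (((j:ℝ) + 1) / (N:ℝ) ^ n) := by
  intro u ⟨_, hu⟩
  have hNn : (0:ℝ) < (N:ℝ) ^ n := by positivity
  constructor
  · rw [div_le_iff₀ hNn]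
    have := Int.floor_le (u * (N:ℝ) ^ n)
    rw [hu] at this; linarith
  · rw [lt_div_iff₀ hNn]
    have := Int.lt_floor_add_one (u * (N:ℝ) ^ n)
    rw [hu] at this; push_cast at this; linarith

end BPVdigits


noncomputable section BPVconstr


/-- scale of level `n` -/
def rho (ρ₀ : ℝ) (R : ℕ) (n : ℕ) : ℝ := ρ₀ / (R:ℝ) ^ n

/-- radius of the dangerous ball around rationals with denominator `q` -/
def rad (ρ₀ : ℝ) (R : ℕ) (q : ℕ) : ℝ := ρ₀ / ((R:ℝ) ^ 3 * ((q:ℝ) * Real.sqrt q))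

/-- the window of denominators handled at level `n` -/
def windowQ (ρ₀ : ℝ) (R : ℕ) (n q : ℕ) : Prop :=
  rho ρ₀ R (n+2) ≤ rad ρ₀ R q ∧ rad ρ₀ R q < rho ρ₀ R (n+1)

section basic

variable {ρ₀ : ℝ} {R : ℕ}

lemma Rpos (hR : 12 ≤ R) : (0:ℝ) < (R:ℝ) := by
  have : (12:ℝ) ≤ (R:ℝ) := by exact_mod_cast hR
  linarith

lemma rho_pos (hρ₀ : 0 < ρ₀) (hR : 12 ≤ R) (n : ℕ) : 0 < rho ρ₀ R n := by
  have := Rpos hR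
  exact div_pos hρ₀ (by positivity)

lemma rho_succ (n : ℕ) : rho ρ₀ R (n+1) = rho ρ₀ R n / (R:ℝ) := by
  rw [rho, rho, pow_succ]
  field_simp

lemma rho_anti (hρ₀ : 0 < ρ₀) (hR : 12 ≤ R) {n k : ℕ} (h : n ≤ k) : rho ρ₀ R k ≤ rho ρ₀ R n := by
  have hRR := Rpos hR
  apply div_le_div_of_nonneg_left hρ₀.le (by positivity)
  have hR1 : (1:ℝ) ≤ (R:ℝ) := by
    have : (12:ℝ) ≤ (R:ℝ) := by exact_mod_cast hR
    linarith
  exact pow_le_pow_right₀ hR1 h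

lemma rho_le (hρ₀ : 0 < ρ₀) (hR : 12 ≤ R) (n : ℕ) : rho ρ₀ R n ≤ ρ₀ := by
  simpa [rho] using rho_anti hρ₀ hR (Nat.zero_le n)

lemma rad_pos (hρ₀ : 0 < ρ₀) (hR : 12 ≤ R) {q : ℕ} (hq : 0 < q) : 0 < rad ρ₀ R q := by
  have := Rpos hR
  have hq' : (0:ℝ) < (q:ℝ) := by exact_mod_cast hq
  have : (0:ℝ) < Real.sqrt q := Real.sqrt_pos.2 hq'
  exact div_pos hρ₀ (by positivity)

/-- every `q ≥ 1` is in some window -/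
lemma exists_window (hρ₀ : 0 < ρ₀) (hR : 12 ≤ R) {q : ℕ} (hq : 0 < q) : ∃ n : ℕ, windowQ ρ₀ R n q := by
  have hRR := Rpos hR
  have hq' : (0:ℝ) < (q:ℝ) := by exact_mod_cast hq
  have hsq : (0:ℝ) < Real.sqrt q := Real.sqrt_pos.2 hq'
  have hq1 : (1:ℝ) ≤ (q:ℝ) := by exact_mod_cast hq
  have hsq1 : (1:ℝ) ≤ Real.sqrt q := by
    rw [show (1:ℝ) = Real.sqrt 1 from (Real.sqrt_one).symm]
    exact Real.sqrt_le_sqrt hq1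
  set X : ℝ := (R:ℝ) ^ 3 * ((q:ℝ) * Real.sqrt q) with hX
  have hXR : (R:ℝ) < X := by
    have h1 : (1:ℝ) ≤ (q:ℝ) * Real.sqrt q := by nlinarith
    have h2 : (R:ℝ) ^ 3 ≤ X := by
      rw [hX]; nlinarith [pow_pos hRR 3]
    have hR1 : (1:ℝ) < (R:ℝ) := by
      have : (12:ℝ) ≤ (R:ℝ) := by exact_mod_cast hR
      linarith
    have h12 : (12:ℝ) ≤ (R:ℝ) := by exact_mod_cast hR
    have hsq' : (144:ℝ) ≤ (R:ℝ) * (R:ℝ) := by nlinarith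
    have hRcube : (R:ℝ) < (R:ℝ)^3 := by nlinarith
    linarith
  obtain ⟨n, h1, h2⟩ := exists_pow_window (le_trans (by norm_num) hR) hXR
  refine ⟨n, ?_, ?_⟩
  · rw [rho, rad, div_le_div_iff₀ (by positivity) (by positivity)]
    rw [← hX]
    nlinarith
  · rw [rho, rad, div_lt_div_iff₀ (by positivity) (by positivity)]
    rw [← hX]
    nlinarith [rho_pos hρ₀ hR (n+1), pow_pos (Rpos hR) (n+1)]

lemma rad_lt_rho {n q : ℕ} (hw : windowQ ρ₀ R n q) : rad ρ₀ R q < rho ρ₀ R (n+1) := hw.2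

/-- denominator bound from the window: `q^(3/2) * R^3 ≤ R^(n+2)` -/
lemma window_q_bound (hρ₀ : 0 < ρ₀) (hR : 12 ≤ R) {n q : ℕ} (hq : 0 < q) (hw : windowQ ρ₀ R n q) :
    (q:ℝ) * Real.sqrt q * (R:ℝ)^3 ≤ (R:ℝ)^(n+2) := by
  have hRR := Rpos hR
  have hq' : (0:ℝ) < (q:ℝ) := by exact_mod_cast hq
  have hsq : (0:ℝ) < Real.sqrt q := Real.sqrt_pos.2 hq'
  have h := hw.1
  rw [rho, rad, div_le_div_iff₀ (by positivity) (by positivity)] at h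
  nlinarith

/-- cube of the denominator bound: `q^3 ≤ R^(2n+4)/R^6` i.e. `q^3 * R^6 ≤ R^(2n+4)` -/
lemma window_q_cube (hρ₀ : 0 < ρ₀) (hR : 12 ≤ R) {n q : ℕ} (hq : 0 < q) (hw : windowQ ρ₀ R n q) :
    ((q:ℝ))^3 * (R:ℝ)^6 ≤ (R:ℝ)^(2*n+4) := by
  have hRR := Rpos hR
  have hq' : (0:ℝ) < (q:ℝ) := by exact_mod_cast hq
  have hsq : Real.sqrt q * Real.sqrt q = (q:ℝ) := Real.mul_self_sqrt hq'.le
  have h := window_q_bound hρ₀ hR hq hw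
  have h2 : ((q:ℝ) * Real.sqrt q * (R:ℝ)^3) * ((q:ℝ) * Real.sqrt q * (R:ℝ)^3)
      ≤ (R:ℝ)^(n+2) * (R:ℝ)^(n+2) := by
    apply mul_le_mul h h (by positivity) (by positivity)
  calc ((q:ℝ))^3 * (R:ℝ)^6
      = ((q:ℝ) * Real.sqrt q * (R:ℝ)^3) * ((q:ℝ) * Real.sqrt q * (R:ℝ)^3) := by
        rw [show ((q:ℝ))^3 = (q:ℝ)*(q:ℝ)*(q:ℝ) by ring]
        nlinarith [hsq]
    _ ≤ (R:ℝ)^(n+2) * (R:ℝ)^(n+2) := h2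
    _ = (R:ℝ)^(2*n+4) := by rw [← pow_add]; ring_nf

end basic

section NODE

variable (Ω : Set Pt) (m : Measure Pt)
variable (δ a b r₀ : ℝ)

/-- admissible separated sets of prospective children -/
def Adm (ρ₀ : ℝ) (R : ℕ) (n : ℕ) (c : Pt) (P : Finset Pt) : Prop :=
  (∀ y ∈ P, y ∈ Ω ∧ dist y c ≤ rho ρ₀ R n / 2) ∧
  (P : Set Pt).Pairwise fun y z => 6 * rho ρ₀ R (n+1) ≤ dist y z

lemma adm_card_le
    (ha : 0 < a) (hb : 0 < b)
    (hAlow : ∀ c ∈ Ω, ∀ r:ℝ, 0 < r → r ≤ r₀ → ENNReal.ofReal (a * r^δ) ≤ m (closedBall c r))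
    (hAup : ∀ c ∈ Ω, ∀ r:ℝ, 0 < r → r ≤ r₀ → m (closedBall c r) ≤ ENNReal.ofReal (b * r^δ))
    {ρ₀ : ℝ} {R : ℕ} (hρ₀ : 0 < ρ₀) (hρ₀r : 2*ρ₀ ≤ r₀) (hR : 12 ≤ R)
    (n : ℕ) (c : Pt) (hc : c ∈ Ω) (P : Finset Pt) (hP : Adm Ω ρ₀ R n c P) :
    (P.card : ℝ) * (a * (rho ρ₀ R (n+1))^δ) ≤ b * (rho ρ₀ R n)^δ := by
  have hRR := Rpos hR
  have hr₀ : 0 < r₀ := by linarith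
  set ρn := rho ρ₀ R n with hρn
  set ρ1 := rho ρ₀ R (n+1) with hρ1
  have hρnpos : 0 < ρn := rho_pos hρ₀ hR n
  have hρ1pos : 0 < ρ1 := rho_pos hρ₀ hR (n+1)
  have hρ1r₀ : ρ1 ≤ r₀ := le_trans (rho_le hρ₀ hR _) (by linarith)
  have hρnr₀ : ρn ≤ r₀ := le_trans (rho_le hρ₀ hR _) (by linarith)
  have hρ1half : ρ1 ≤ ρn / 2 := by
    rw [hρ1, rho_succ]
    rw [div_le_div_iff₀ hRR (by norm_num)]
    have h12 : (12:ℝ) ≤ (R:ℝ) := by exact_mod_cast hR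
    nlinarith
  -- disjointness of the balls
  have hdisj : (P : Set Pt).PairwiseDisjoint fun y => closedBall y ρ1 := by
    intro y hy z hz hyz
    have hsep := hP.2 hy hz hyz
    rw [Function.onFun]
    rw [Set.disjoint_left]
    intro w hw hw'
    rw [mem_closedBall] at hw hw'
    have : dist y z ≤ 2 * ρ1 := by
      calc dist y z ≤ dist y w + dist w z := dist_triangle _ _ _
        _ ≤ ρ1 + ρ1 := by
            rw [dist_comm y w]
            exact add_le_add hw (dist_comm w z ▸ hw')
        _ = 2 * ρ1 := by ring
    linarith
  have hmeas : ∀ y ∈ P, MeasurableSet (closedBall y ρ1) := fun y _ => measurableSet_closedBall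
  have hunion : m (⋃ y ∈ P, closedBall y ρ1) = ∑ y ∈ P, m (closedBall y ρ1) :=
    measure_biUnion_finset hdisj hmeas
  have hsub : (⋃ y ∈ P, closedBall y ρ1) ⊆ closedBall c ρn := by
    intro w hw
    simp only [Set.mem_iUnion] at hw
    obtain ⟨y, hy, hw⟩ := hw
    rw [mem_closedBall] at hw ⊢
    calc dist w c ≤ dist w y + dist y c := dist_triangle _ _ _
      _ ≤ ρ1 + ρn / 2 := add_le_add hw (hP.1 y hy).2
      _ ≤ ρn := by linarith
  have hlow : ∀ y ∈ P, ENNReal.ofReal (a * ρ1^δ) ≤ m (closedBall y ρ1) :=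
    fun y hy => hAlow y (hP.1 y hy).1 ρ1 hρ1pos hρ1r₀
  have hkey : (P.card : ℝ≥0∞) * ENNReal.ofReal (a * ρ1^δ) ≤ ENNReal.ofReal (b * ρn^δ) := by
    calc (P.card : ℝ≥0∞) * ENNReal.ofReal (a * ρ1^δ)
        = ∑ _y ∈ P, ENNReal.ofReal (a * ρ1^δ) := by
          rw [Finset.sum_const, nsmul_eq_mul]
      _ ≤ ∑ y ∈ P, m (closedBall y ρ1) := Finset.sum_le_sum hlow
      _ = m (⋃ y ∈ P, closedBall y ρ1) := hunion.symm
      _ ≤ m (closedBall c ρn) := measure_mono hsub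
      _ ≤ ENNReal.ofReal (b * ρn^δ) := hAup c hc ρn hρnpos hρnr₀
  have hcast : ((P.card : ℝ≥0∞)) = ENNReal.ofReal (P.card : ℝ) := by
    simp [ENNReal.ofReal_natCast]
  rw [hcast, ← ENNReal.ofReal_mul (by positivity)] at hkey
  exact (ENNReal.ofReal_le_ofReal_iff (by positivity)).1 hkey

lemma adm_card_nat_le
    (ha : 0 < a) (hb : 0 < b)
    (hAlow : ∀ c ∈ Ω, ∀ r:ℝ, 0 < r → r ≤ r₀ → ENNReal.ofReal (a * r^δ) ≤ m (closedBall c r))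
    (hAup : ∀ c ∈ Ω, ∀ r:ℝ, 0 < r → r ≤ r₀ → m (closedBall c r) ≤ ENNReal.ofReal (b * r^δ))
    {ρ₀ : ℝ} {R : ℕ} (hρ₀ : 0 < ρ₀) (hρ₀r : 2*ρ₀ ≤ r₀) (hR : 12 ≤ R)
    (n : ℕ) (c : Pt) (hc : c ∈ Ω) (P : Finset Pt) (hP : Adm Ω ρ₀ R n c P) :
    P.card ≤ ⌈(b/a) * (R:ℝ)^δ⌉₊ := by
  have h := adm_card_le Ω m δ a b r₀ ha hb hAlow hAup hρ₀ hρ₀r hR n c hc P hP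
  have hρ1pos : 0 < rho ρ₀ R (n+1) := rho_pos hρ₀ hR (n+1)
  have hrpow : 0 < (rho ρ₀ R (n+1))^δ := Real.rpow_pos_of_pos hρ1pos δ
  have hratio : (rho ρ₀ R n)^δ = (R:ℝ)^δ * (rho ρ₀ R (n+1))^δ := by
    rw [← Real.mul_rpow (le_of_lt (Rpos hR)) hρ1pos.le]
    congr 1
    rw [rho_succ]
    field_simp
  have hcard : (P.card : ℝ) ≤ (b/a) * (R:ℝ)^δ := by
    rw [hratio] at h
    rw [div_mul_eq_mul_div, le_div_iff₀ ha]
    nlinarith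
  calc P.card ≤ ⌈(P.card : ℝ)⌉₊ := by simp
    _ ≤ ⌈(b/a) * (R:ℝ)^δ⌉₊ := Nat.ceil_le_ceil hcard

end NODE

section NODE2

variable (Ω : Set Pt) (m : Measure Pt)
variable (δ a b r₀ : ℝ)

/-- existence of a maximal admissible set with a good lower bound on its cardinality -/
lemma exists_max_adm
    (ha : 0 < a) (hb : 0 < b) (hmΩ : m Ωᶜ = 0)
    (hAlow : ∀ c ∈ Ω, ∀ r:ℝ, 0 < r → r ≤ r₀ → ENNReal.ofReal (a * r^δ) ≤ m (closedBall c r))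
    (hAup : ∀ c ∈ Ω, ∀ r:ℝ, 0 < r → r ≤ r₀ → m (closedBall c r) ≤ ENNReal.ofReal (b * r^δ))
    {ρ₀ : ℝ} {R : ℕ} (hρ₀ : 0 < ρ₀) (hρ₀r : 2*ρ₀ ≤ r₀) (hR : 12 ≤ R)
    (n : ℕ) (c : Pt) (hc : c ∈ Ω) :
    ∃ P : Finset Pt, Adm Ω ρ₀ R n c P ∧
      (a/b) * ((R:ℝ)/12)^δ ≤ (P.card : ℝ) := by
  classical
  have hRR := Rpos hR
  have hr₀ : 0 < r₀ := by linarith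
  set ρn := rho ρ₀ R n with hρn
  set ρ1 := rho ρ₀ R (n+1) with hρ1
  have hρnpos : 0 < ρn := rho_pos hρ₀ hR n
  have hρ1pos : 0 < ρ1 := rho_pos hρ₀ hR (n+1)
  have h12 : (12:ℝ) ≤ (R:ℝ) := by exact_mod_cast hR
  have hρ1r₀ : 6 * ρ1 ≤ r₀ := by
    have h1 : (6:ℝ) ≤ (R:ℝ)^(n+1) := by
      calc (6:ℝ) ≤ (R:ℝ) := by linarith
        _ = (R:ℝ)^1 := (pow_one _).symm
        _ ≤ (R:ℝ)^(n+1) := pow_le_pow_right₀ (by linarith) (by omega)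
    have h2 : 6 * ρ1 ≤ ρ₀ := by
      rw [hρ1, rho]
      calc 6 * (ρ₀/(R:ℝ)^(n+1)) ≤ (R:ℝ)^(n+1) * (ρ₀/(R:ℝ)^(n+1)) :=
            mul_le_mul_of_nonneg_right h1 (by positivity)
        _ = ρ₀ := by field_simp
    linarith
  -- the greatest cardinality of an admissible set
  set K := ⌈(b/a) * (R:ℝ)^δ⌉₊ with hK
  set Q : ℕ → Prop := fun k => ∃ P : Finset Pt, Adm Ω ρ₀ R n c P ∧ P.card = k with hQ
  have hQ0 : Q 0 := ⟨∅, ⟨by simp, by simp⟩, rfl⟩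
  have hQle : ∀ k, Q k → k ≤ K := by
    rintro k ⟨P, hP, rfl⟩
    exact adm_card_nat_le Ω m δ a b r₀ ha hb hAlow hAup hρ₀ hρ₀r hR n c hc P hP
  set k₀ := Nat.findGreatest Q K with hk₀
  have hspec : Q k₀ := Nat.findGreatest_spec (Nat.zero_le K) hQ0
  obtain ⟨P, hP, hPcard⟩ := hspec
  have hmax : ∀ P' : Finset Pt, Adm Ω ρ₀ R n c P' → P'.card ≤ k₀ :=
    fun P' hP' => Nat.le_findGreatest (hQle _ ⟨P', hP', rfl⟩) ⟨P', hP', rfl⟩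
  refine ⟨P, hP, ?_⟩
  -- covering property by maximality
  have hcov : ∀ z, z ∈ Ω → dist z c ≤ ρn / 2 → ∃ y ∈ P, dist z y < 6 * ρ1 := by
    intro z hz hzc
    by_contra hcon
    push_neg at hcon
    have hznot : z ∉ P := by
      intro hzP
      have := hcon z hzP
      simp at this
      linarith
    have hAdm' : Adm Ω ρ₀ R n c (insert z P) := by
      constructor
      · intro y hy
        rcases Finset.mem_insert.1 hy with rfl | hy
        · exact ⟨hz, hzc⟩
        · exact hP.1 y hy
      · rw [Finset.coe_insert]
        refine Set.pairwise_insert.2 ⟨hP.2, fun y hy hyz => ⟨hcon y hy, ?_⟩⟩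
        rw [dist_comm y z]; exact hcon y hy
    have := hmax _ hAdm'
    rw [Finset.card_insert_of_notMem hznot, hPcard] at this
    omega
  -- measure lower bound via the covering
  have hsub : closedBall c (ρn/2) ⊆ (⋃ y ∈ P, closedBall y (6*ρ1)) ∪ Ωᶜ := by
    intro w hw
    by_cases hwΩ : w ∈ Ω
    · left
      obtain ⟨y, hy, hd⟩ := hcov w hwΩ (mem_closedBall.1 hw)
      simp only [Set.mem_iUnion]
      exact ⟨y, hy, mem_closedBall.2 hd.le⟩
    · right; exact hwΩ
  have hup : ∀ y ∈ P, m (closedBall y (6*ρ1)) ≤ ENNReal.ofReal (b * (6*ρ1)^δ) :=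
    fun y hy => hAup y (hP.1 y hy).1 (6*ρ1) (by positivity) hρ1r₀
  have hmain : ENNReal.ofReal (a * (ρn/2)^δ) ≤ (P.card : ℝ≥0∞) * ENNReal.ofReal (b * (6*ρ1)^δ) := by
    calc ENNReal.ofReal (a * (ρn/2)^δ)
        ≤ m (closedBall c (ρn/2)) := hAlow c hc (ρn/2) (by positivity)
          (by linarith [rho_le hρ₀ hR n])
      _ ≤ m ((⋃ y ∈ P, closedBall y (6*ρ1)) ∪ Ωᶜ) := measure_mono hsub
      _ ≤ m (⋃ y ∈ P, closedBall y (6*ρ1)) + m Ωᶜ := measure_union_le _ _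
      _ = m (⋃ y ∈ P, closedBall y (6*ρ1)) := by rw [hmΩ, add_zero]
      _ ≤ ∑ y ∈ P, m (closedBall y (6*ρ1)) := measure_biUnion_finset_le _ _
      _ ≤ ∑ _y ∈ P, ENNReal.ofReal (b * (6*ρ1)^δ) := Finset.sum_le_sum hup
      _ = (P.card : ℝ≥0∞) * ENNReal.ofReal (b * (6*ρ1)^δ) := by
          rw [Finset.sum_const, nsmul_eq_mul]
  have hreal : a * (ρn/2)^δ ≤ (P.card : ℝ) * (b * (6*ρ1)^δ) := by
    have hcast : ((P.card : ℝ≥0∞)) = ENNReal.ofReal (P.card : ℝ) := by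
      simp [ENNReal.ofReal_natCast]
    rw [hcast, ← ENNReal.ofReal_mul (by positivity)] at hmain
    exact (ENNReal.ofReal_le_ofReal_iff (by positivity)).1 hmain
  -- convert to the claimed bound
  have hratio : (ρn/2)^δ = ((R:ℝ)/12)^δ * (6*ρ1)^δ := by
    rw [← Real.mul_rpow (by positivity) (by positivity)]
    congr 1
    rw [hρ1, rho_succ]
    field_simp
    ring
  have h6pos : (0:ℝ) < (6*ρ1)^δ := Real.rpow_pos_of_pos (by positivity) δ
  rw [hratio] at hreal
  rw [div_mul_eq_mul_div, div_le_iff₀ hb]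
  nlinarith
end NODE2

section LINE

/-- dangerous rational points for a level-`n` node centred at `c` -/
def DanPt (ρ₀ : ℝ) (R : ℕ) (n : ℕ) (c : Pt) (z : Pt) : Prop :=
  ∃ q : ℕ, ∃ p : Fin 2 → ℤ, 0 < q ∧ windowQ ρ₀ R n q ∧ z = ratPt p q ∧
    dist z c ≤ 2 * rho ρ₀ R n

lemma dan_online {ρ₀ : ℝ} {R : ℕ} (hρ₀ : 0 < ρ₀) (hρ₀1 : ρ₀ ≤ 1/2) (hR : 12 ≤ R)
    (n : ℕ) (c : Pt) {A B z : Pt}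
    (hA : DanPt ρ₀ R n c A) (hB : DanPt ρ₀ R n c B) (hz : DanPt ρ₀ R n c z)
    (hAB : A ≠ B) :
    ∃ t : ℝ, ∀ k, z k = A k + t * (B k - A k) := by
  have hRR := Rpos hR
  set ρn := rho ρ₀ R n with hρn
  have hρnpos : 0 < ρn := rho_pos hρ₀ hR n
  obtain ⟨qA, pA, hqA, hwA, hAeq, hAc⟩ := hA
  obtain ⟨qB, pB, hqB, hwB, hBeq, hBc⟩ := hB
  obtain ⟨qz, pz, hqz, hwz, hzeq, hzc⟩ := hz
  -- coordinatewise bounds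
  have hcoord : ∀ (w w' : Pt), dist w c ≤ 2*ρn → dist w' c ≤ 2*ρn →
      ∀ k, |w k - w' k| ≤ 4*ρn := by
    intro w w' hw hw' k
    have h1 : dist (w k) (w' k) ≤ dist w w' := dist_le_pi_dist w w' k
    have h2 : dist w w' ≤ dist w c + dist c w' := dist_triangle _ _ _
    rw [dist_comm c w'] at h2
    rw [Real.dist_eq] at h1
    linarith
  -- the determinant vanishes
  have hdet0 : (B 0 - A 0) * (z 1 - A 1) - (B 1 - A 1) * (z 0 - A 0) = 0 := by
    by_contra hne
    have hlow : 1 ≤ |(B 0 - A 0) * (z 1 - A 1) - (B 1 - A 1) * (z 0 - A 0)|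
        * ((qA:ℝ) * qB * qz) := by
      have := det_ratPt_lower pA pB pz qA qB qz hqA hqB hqz
        (by rw [← hAeq, ← hBeq, ← hzeq]; exact hne)
      rw [← hAeq, ← hBeq, ← hzeq] at this
      exact this
    have hup : |(B 0 - A 0) * (z 1 - A 1) - (B 1 - A 1) * (z 0 - A 0)| ≤ 2 * (4*ρn)^2 := by
      have hu : ∀ k, |(fun k => B k - A k) k| ≤ 4*ρn := hcoord B A hBc hAc
      have hv : ∀ k, |(fun k => z k - A k) k| ≤ 4*ρn := hcoord z A hzc hAc
      exact det_upper (fun k => B k - A k) (fun k => z k - A k) (4*ρn) hu hv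
    set QQ : ℝ := (qA:ℝ) * qB * qz with hQQ
    have hQQpos : 0 < QQ := by
      have h1 : (0:ℝ) < qA := by exact_mod_cast hqA
      have h2 : (0:ℝ) < qB := by exact_mod_cast hqB
      have h3 : (0:ℝ) < qz := by exact_mod_cast hqz
      positivity
    have h1 : (1:ℝ) ≤ 2*(4*ρn)^2 * QQ := by
      have := mul_le_mul_of_nonneg_right hup hQQpos.le
      linarith
    set u : ℝ := (R:ℝ)^n with hu
    have hupos : 0 < u := pow_pos hRR n
    have hRn : (R:ℝ)^(2*n+4) = u*u*(R:ℝ)^4 := by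
      rw [hu, show 2*n+4 = n+(n+4) from by omega, pow_add, pow_add]
      ring
    have hcA := window_q_cube hρ₀ hR hqA hwA
    have hcB := window_q_cube hρ₀ hR hqB hwB
    have hcz := window_q_cube hρ₀ hR hqz hwz
    rw [hRn] at hcA hcB hcz
    have hq3 : QQ^3 * (R:ℝ)^18 ≤ (u*u*(R:ℝ)^4)^3 := by
      have hA6 : (0:ℝ) ≤ (qA:ℝ)^3 * (R:ℝ)^6 := by positivity
      have hB6 : (0:ℝ) ≤ (qB:ℝ)^3 * (R:ℝ)^6 := by positivity
      have hz6 : (0:ℝ) ≤ (qz:ℝ)^3 * (R:ℝ)^6 := by positivity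
      have hprod : ((qA:ℝ)^3 * (R:ℝ)^6) * (((qB:ℝ)^3 * (R:ℝ)^6) * ((qz:ℝ)^3 * (R:ℝ)^6))
          ≤ (u*u*(R:ℝ)^4) * ((u*u*(R:ℝ)^4) * (u*u*(R:ℝ)^4)) := by
        apply mul_le_mul hcA _ (by positivity) (by positivity)
        apply mul_le_mul hcB hcz hz6 (by positivity)
      calc QQ^3 * (R:ℝ)^18
          = ((qA:ℝ)^3 * (R:ℝ)^6) * (((qB:ℝ)^3 * (R:ℝ)^6) * ((qz:ℝ)^3 * (R:ℝ)^6)) := by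
            rw [hQQ]; ring
        _ ≤ (u*u*(R:ℝ)^4) * ((u*u*(R:ℝ)^4) * (u*u*(R:ℝ)^4)) := hprod
        _ = (u*u*(R:ℝ)^4)^3 := by ring
    -- 1 ≤ 32 (ρ₀/u)² QQ, so u² ≤ 32 ρ₀² QQ
    have hρu : ρn = ρ₀ / u := by rw [hρn, rho, hu]
    have h3 : u^2 ≤ 32*ρ₀^2*QQ := by
      have hexp : (4*ρn)^2 * u^2 = 16*ρ₀^2 := by
        rw [hρu]; field_simp; ring
      nlinarith [sq_nonneg u, hupos]
    have h4 : u^6 ≤ 32^3*ρ₀^6*QQ^3 := by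
      have := pow_le_pow_left₀ (by positivity : (0:ℝ) ≤ u^2) h3 3
      calc u^6 = (u^2)^3 := by ring
        _ ≤ (32*ρ₀^2*QQ)^3 := this
        _ = 32^3*ρ₀^6*QQ^3 := by ring
    have e3 : u^6 * (R:ℝ)^18 ≤ (32^3*ρ₀^6) * (u^6 * (R:ℝ)^12) := by
      calc u^6 * (R:ℝ)^18 ≤ (32^3*ρ₀^6*QQ^3) * (R:ℝ)^18 :=
            mul_le_mul_of_nonneg_right h4 (by positivity)
        _ = (32^3*ρ₀^6) * (QQ^3 * (R:ℝ)^18) := by ring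
        _ ≤ (32^3*ρ₀^6) * ((u*u*(R:ℝ)^4)^3) := by
            apply mul_le_mul_of_nonneg_left hq3 (by positivity)
        _ = (32^3*ρ₀^6) * (u^6 * (R:ℝ)^12) := by ring
    have e4 : (R:ℝ)^18 ≤ (32^3*ρ₀^6) * (R:ℝ)^12 := by
      have hu6 : 0 < u^6 := by positivity
      have := e3
      rw [show (32^3*ρ₀^6) * (u^6 * (R:ℝ)^12) = u^6 * ((32^3*ρ₀^6) * (R:ℝ)^12) from by ring] at this
      exact le_of_mul_le_mul_left this hu6
    have e5 : (R:ℝ)^6 ≤ 32^3*ρ₀^6 := by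
      have hR12 : (0:ℝ) < (R:ℝ)^12 := by positivity
      have heq : (R:ℝ)^6 * (R:ℝ)^12 = (R:ℝ)^18 := by
        rw [← pow_add]
      have : (R:ℝ)^6 * (R:ℝ)^12 ≤ (32^3*ρ₀^6) * (R:ℝ)^12 := by
        rw [heq]; exact e4
      exact le_of_mul_le_mul_right this hR12
    have e6 : ρ₀^6 ≤ (1/2:ℝ)^6 := pow_le_pow_left₀ hρ₀.le hρ₀1 6
    have e7 : (12:ℝ)^6 ≤ (R:ℝ)^6 := by
      apply pow_le_pow_left₀ (by norm_num)
      exact_mod_cast hR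
    norm_num at e5 e6 e7
    linarith
  -- extract the parametrisation
  have hABpos : 0 < dist A B := dist_pos.2 hAB
  obtain ⟨k₀, hk₀⟩ := exists_coord_dist A B
  have hk₀ne : B k₀ - A k₀ ≠ 0 := by
    intro h
    have hz0 : dist A B = 0 := by
      rw [hk₀, Real.dist_eq, show A k₀ - B k₀ = -(B k₀ - A k₀) from by ring, abs_neg, h,
        abs_zero]
    linarith
  have hk01 : k₀ = 0 ∨ k₀ = 1 := by
    fin_cases k₀
    · exact Or.inl rfl
    · exact Or.inr rfl
  rcases hk01 with h01 | h01 <;> rw [h01] at hk₀ne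
  · refine ⟨(z 0 - A 0)/(B 0 - A 0), ?_⟩
    intro k
    fin_cases k
    · simp only [Fin.zero_eta, Fin.mk_one]
      field_simp [hk₀ne]
      ring
    · simp only [Fin.zero_eta, Fin.mk_one]
      field_simp [hk₀ne]
      first
        | linear_combination hdet0
        | linear_combination -hdet0
        | linear_combination (z 1 - A 1) * hdet0
  · refine ⟨(z 1 - A 1)/(B 1 - A 1), ?_⟩
    intro k
    fin_cases k
    · simp only [Fin.zero_eta, Fin.mk_one]
      field_simp [hk₀ne]
      first
        | linear_combination hdet0
        | linear_combination -hdet0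
        | linear_combination (z 0 - A 0) * hdet0
    · simp only [Fin.zero_eta, Fin.mk_one]
      field_simp [hk₀ne]
      ring
end LINE

section NODE3

variable (Ω : Set Pt) (m : Measure Pt)
variable (δ a b r₀ : ℝ)

lemma node_children
    (ha : 0 < a) (hb : 0 < b) (hmΩ : m Ωᶜ = 0)
    (hAlow : ∀ c ∈ Ω, ∀ r:ℝ, 0 < r → r ≤ r₀ → ENNReal.ofReal (a * r^δ) ≤ m (closedBall c r))
    (hAup : ∀ c ∈ Ω, ∀ r:ℝ, 0 < r → r ≤ r₀ → m (closedBall c r) ≤ ENNReal.ofReal (b * r^δ))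
    {ρ₀ : ℝ} {R : ℕ} (hρ₀ : 0 < ρ₀) (hρ₀1 : ρ₀ ≤ 1/2) (hρ₀r : 2*ρ₀ ≤ r₀) (hR : 12 ≤ R)
    (NN : ℕ) (hNN : (NN:ℝ) + (4*(R:ℝ)+3) ≤ (a/b) * ((R:ℝ)/12)^δ)
    (n : ℕ) (c : Pt) (hc : c ∈ Ω) :
    ∃ f : Fin NN → Pt, (∀ i, f i ∈ Ω) ∧ (∀ i, dist (f i) c ≤ rho ρ₀ R n / 2) ∧
      (∀ i i', i ≠ i' → 6 * rho ρ₀ R (n+1) ≤ dist (f i) (f i')) ∧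
      (∀ i (q : ℕ) (p : Fin 2 → ℤ), 0 < q → windowQ ρ₀ R n q →
        rho ρ₀ R (n+1) + rad ρ₀ R q < dist (f i) (ratPt p q)) := by
  classical
  have hRR := Rpos hR
  have h12 : (12:ℝ) ≤ (R:ℝ) := by exact_mod_cast hR
  obtain ⟨P, hP, hPlow⟩ := exists_max_adm Ω m δ a b r₀ ha hb hmΩ hAlow hAup hρ₀ hρ₀r hR n c hc
  set ρn := rho ρ₀ R n with hρn
  set ρ1 := rho ρ₀ R (n+1) with hρ1
  have hρnpos : 0 < ρn := rho_pos hρ₀ hR n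
  have hρ1pos : 0 < ρ1 := rho_pos hρ₀ hR (n+1)
  have hρ1n : ρ1 = ρn / (R:ℝ) := by rw [hρ1, hρn, rho_succ]
  have hρ1small : 12 * ρ1 ≤ ρn := by
    rw [hρ1n]
    calc 12 * (ρn/(R:ℝ)) ≤ (R:ℝ) * (ρn/(R:ℝ)) :=
          mul_le_mul_of_nonneg_right h12 (by positivity)
      _ = ρn := by field_simp
  set killedPred : Pt → Prop :=
    fun y => ∃ (q : ℕ) (p : Fin 2 → ℤ), 0 < q ∧ windowQ ρ₀ R n q ∧
      dist y (ratPt p q) ≤ ρ1 + rad ρ₀ R q with hkp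
  set Killed := P.filter killedPred with hK
  -- each killed point is very close to a dangerous point
  have hkd : ∀ y ∈ Killed, ∃ z, DanPt ρ₀ R n c z ∧ dist y z ≤ 2*ρ1 := by
    intro y hy
    rw [hK, Finset.mem_filter] at hy
    obtain ⟨hyP, q, p, hq, hw, hd⟩ := hy
    have hrad : rad ρ₀ R q < ρ1 := hw.2
    have hdyz : dist y (ratPt p q) ≤ 2*ρ1 := by linarith
    have hdyc : dist y c ≤ ρn / 2 := (hP.1 y hyP).2
    refine ⟨ratPt p q, ⟨q, p, hq, hw, rfl, ?_⟩, hdyz⟩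
    calc dist (ratPt p q) c ≤ dist (ratPt p q) y + dist y c := dist_triangle _ _ _
      _ ≤ 2*ρ1 + ρn/2 := add_le_add (dist_comm y (ratPt p q) ▸ hdyz) hdyc
      _ ≤ 2*ρn := by linarith
  have hsep : ∀ y ∈ Killed, ∀ y' ∈ Killed, y ≠ y' → 6*ρ1 ≤ dist y y' := by
    intro y hy y' hy' hne
    exact hP.2 (Finset.mem_coe.2 (Finset.filter_subset _ _ hy))
      (Finset.mem_coe.2 (Finset.filter_subset _ _ hy')) hne
  -- killed count
  have hcard_killed : Killed.card ≤ 4*R+3 := by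
    by_cases hsing : ∀ z w, DanPt ρ₀ R n c z → DanPt ρ₀ R n c w → z = w
    · -- degenerate case: at most one killed point
      have : Killed.card ≤ 1 := by
        rw [Finset.card_le_one]
        intro y hy y' hy'
        obtain ⟨z, hz, hdz⟩ := hkd y hy
        obtain ⟨z', hz', hdz'⟩ := hkd y' hy'
        have hzz : z = z' := hsing _ _ hz hz'
        by_contra hne
        have h6 := hsep y hy y' hy' hne
        have : dist y y' ≤ 4*ρ1 := by
          calc dist y y' ≤ dist y z + dist z y' := dist_triangle _ _ _
            _ ≤ 2*ρ1 + 2*ρ1 := by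
                refine add_le_add hdz ?_
                rw [hzz, dist_comm]
                exact hdz'
            _ = 4*ρ1 := by ring
        linarith
      omega
    · push_neg at hsing
      obtain ⟨A, B, hA, hB, hABne⟩ := hsing
      have hℓpos : 0 < dist A B := dist_pos.2 hABne
      set ℓ := dist A B with hℓ
      have hBA : ∀ k, |B k - A k| ≤ ℓ := by
        intro k
        rw [hℓ, show |B k - A k| = dist (A k) (B k) from by rw [Real.dist_eq, abs_sub_comm]]
        exact dist_le_pi_dist A B k
      have hAc : dist A c ≤ 2*ρn := by obtain ⟨_,_,_,_,_,h⟩ := hA; exact h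
      have hline : ∀ y ∈ Killed, ∃ t:ℝ,
          dist y (fun k => A k + t*(B k - A k)) ≤ 2*ρ1 ∧ |t| * ℓ ≤ 4*ρn := by
        intro y hy
        obtain ⟨z, hz, hdz⟩ := hkd y hy
        obtain ⟨t, ht⟩ := dan_online hρ₀ hρ₀1 hR n c hA hB hz hABne
        have hzfun : (fun k => A k + t*(B k - A k)) = z := by
          funext k
          exact (ht k).symm
        refine ⟨t, by rw [hzfun]; exact hdz, ?_⟩
        obtain ⟨k₀, hk₀⟩ := exists_coord_dist A B
        have hzc : dist z c ≤ 2*ρn := by obtain ⟨_,_,_,_,_,h⟩ := hz; exact h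
        have h1 : |z k₀ - A k₀| ≤ 4*ρn := by
          rw [show |z k₀ - A k₀| = dist (z k₀) (A k₀) from Real.dist_eq _ _]
          calc dist (z k₀) (A k₀) ≤ dist z A := dist_le_pi_dist z A k₀
            _ ≤ dist z c + dist c A := dist_triangle _ _ _
            _ ≤ 2*ρn + 2*ρn := add_le_add hzc (dist_comm c A ▸ hAc)
            _ = 4*ρn := by ring
        have h2 : z k₀ - A k₀ = t * (B k₀ - A k₀) := by rw [ht k₀]; ring
        have h3 : |t| * |B k₀ - A k₀| ≤ 4*ρn := by
          rw [← abs_mul, ← h2]; exact h1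
        have h4 : |B k₀ - A k₀| = ℓ := by
          rw [hℓ, hk₀, Real.dist_eq, abs_sub_comm]
        rw [← h4]; exact h3
      choose! tfun htfun using hline
      -- the integer labels
      set F : Pt → ℤ := fun y => ⌊tfun y * ℓ / (2*ρ1)⌋ with hF
      have hcard := Finset.card_le_card_of_injOn
        (s := Killed) (t := Finset.Icc (-(2*(R:ℤ)+1)) (2*(R:ℤ)+1)) F
        (by
          intro y hy
          obtain ⟨_, hty⟩ := htfun y hy
          have hsy : |tfun y * ℓ / (2*ρ1)| ≤ 2*(R:ℝ) := by
            rw [abs_div, abs_mul, abs_of_pos (by positivity : (0:ℝ) < 2*ρ1)]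
            rw [div_le_iff₀ (by positivity)]
            have habsl : |ℓ| = ℓ := abs_of_pos hℓpos
            rw [habsl]
            calc |tfun y| * ℓ ≤ 4*ρn := hty
              _ = 2*(R:ℝ)*(2*ρ1) := by rw [hρ1n]; field_simp; ring
          simp only [hF]
          rw [Finset.mem_coe, Finset.mem_Icc]
          have habs := abs_le.1 hsy
          constructor
          · apply Int.le_floor.2
            push_cast
            linarith [habs.1]
          · have h5 : (⌊tfun y * ℓ / (2*ρ1)⌋ : ℝ) ≤ ((2*(R:ℤ)+1 : ℤ) : ℝ) := by
              have := le_trans (Int.floor_le (tfun y * ℓ / (2*ρ1))) habs.2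
              push_cast
              linarith
            exact_mod_cast h5
          )
        (by
          intro y hy y' hy' hFF
          by_contra hne
          have h6 := hsep y hy y' hy' hne
          obtain ⟨hdy, hty⟩ := htfun y hy
          obtain ⟨hdy', hty'⟩ := htfun y' hy'
          set zy : Pt := fun k => A k + tfun y * (B k - A k) with hzy
          set zy' : Pt := fun k => A k + tfun y' * (B k - A k) with hzy'
          have hzz : dist zy zy' ≤ |tfun y - tfun y'| * ℓ := by
            rw [dist_pi_le_iff (by positivity)]
            intro k
            rw [hzy, hzy']
            rw [Real.dist_eq]
            have : A k + tfun y * (B k - A k) - (A k + tfun y' * (B k - A k))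
                = (tfun y - tfun y') * (B k - A k) := by ring
            rw [this, abs_mul]
            exact mul_le_mul_of_nonneg_left (hBA k) (abs_nonneg _)
          have h2ρ : 2*ρ1 ≤ dist zy zy' := by
            have := dist_triangle4 y zy zy' y'
            have h7 : dist y y' ≤ dist y zy + dist zy zy' + dist zy' y' :=
              dist_triangle4 _ _ _ _
            rw [dist_comm zy' y'] at h7
            linarith
          have hsep1 : 1 ≤ |tfun y * ℓ / (2*ρ1) - tfun y' * ℓ / (2*ρ1)| := by
            have : tfun y * ℓ / (2*ρ1) - tfun y' * ℓ / (2*ρ1)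
                = (tfun y - tfun y') * ℓ / (2*ρ1) := by ring
            rw [this, abs_div, abs_mul, abs_of_pos (by positivity : (0:ℝ) < 2*ρ1),
              abs_of_pos hℓpos]
            rw [le_div_iff₀ (by positivity)]
            linarith [hzz.trans' h2ρ]
          have hlt : |tfun y * ℓ / (2*ρ1) - tfun y' * ℓ / (2*ρ1)| < 1 := by
            have e1 := Int.floor_le (tfun y * ℓ / (2*ρ1))
            have e2 := Int.lt_floor_add_one (tfun y * ℓ / (2*ρ1))
            have e3 := Int.floor_le (tfun y' * ℓ / (2*ρ1))
            have e4 := Int.lt_floor_add_one (tfun y' * ℓ / (2*ρ1))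
            simp only [hF] at hFF
            rw [abs_lt]
            rw [hFF] at e1 e2
            exact ⟨by linarith, by linarith⟩
          linarith
          )
      have hicc : (Finset.Icc (-(2*(R:ℤ)+1)) (2*(R:ℤ)+1)).card = 4*R+3 := by
        rw [Int.card_Icc]
        omega
      omega
  -- survivors
  have hNle : NN ≤ (P \ Killed).card := by
    have h1 : ((NN:ℝ)) + (4*(R:ℝ)+3) ≤ (P.card : ℝ) := le_trans hNN hPlow
    have h2 : (NN + (4*R+3) : ℕ) ≤ P.card := by
      have : ((NN + (4*R+3) : ℕ) : ℝ) ≤ (P.card : ℝ) := by push_cast; linarith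
      exact_mod_cast this
    have h3 := Finset.le_card_sdiff Killed P
    omega
  obtain ⟨S', hS'sub, hS'card⟩ := Finset.exists_subset_card_eq hNle
  have hS'P : ∀ y ∈ S', y ∈ P := fun y hy => (Finset.mem_sdiff.1 (hS'sub hy)).1
  have hS'nk : ∀ y ∈ S', ¬ killedPred y := by
    intro y hy hk
    have := (Finset.mem_sdiff.1 (hS'sub hy)).2
    exact this (Finset.mem_filter.2 ⟨hS'P y hy, hk⟩)
  set e := S'.equivFinOfCardEq hS'card with he
  refine ⟨fun i => (e.symm i : Pt), ?_, ?_, ?_, ?_⟩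
  · intro i
    exact (hP.1 _ (hS'P _ (e.symm i).2)).1
  · intro i
    exact (hP.1 _ (hS'P _ (e.symm i).2)).2
  · intro i i' hii
    apply hP.2 (Finset.mem_coe.2 (hS'P _ (e.symm i).2)) (Finset.mem_coe.2 (hS'P _ (e.symm i').2))
    intro hcc
    apply hii
    have : e.symm i = e.symm i' := Subtype.ext hcc
    exact e.symm.injective this
  · intro i q p hq hw
    by_contra hle
    push_neg at hle
    exact hS'nk _ (e.symm i).2 ⟨q, p, hq, hw, hle⟩
end NODE3

section CONSTR

variable (Ω : Set Pt) (m : Measure Pt)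
variable (δ a b r₀ : ℝ)

lemma construction
    (ha : 0 < a) (hb : 0 < b) (hmΩ : m Ωᶜ = 0)
    (hAlow : ∀ c ∈ Ω, ∀ r:ℝ, 0 < r → r ≤ r₀ → ENNReal.ofReal (a * r^δ) ≤ m (closedBall c r))
    (hAup : ∀ c ∈ Ω, ∀ r:ℝ, 0 < r → r ≤ r₀ → m (closedBall c r) ≤ ENNReal.ofReal (b * r^δ))
    {ρ₀ : ℝ} {R : ℕ} (hρ₀ : 0 < ρ₀) (hρ₀1 : ρ₀ ≤ 1/2) (hρ₀r : 2*ρ₀ ≤ r₀) (hR : 12 ≤ R)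
    (NN : ℕ) (hNN : (NN:ℝ) + (4*(R:ℝ)+3) ≤ (a/b) * ((R:ℝ)/12)^δ)
    (hΩclosed : IsClosed Ω) (hΩne : Ω.Nonempty) :
    ∃ g : (ℕ → Fin NN) → Pt, ∃ cs : (ℕ → Fin NN) → ℕ → Pt,
      (∀ ω ω' n, (∀ k < n, ω k = ω' k) → cs ω n = cs ω' n) ∧
      (∀ ω, Filter.Tendsto (fun n => cs ω n) Filter.atTop (nhds (g ω))) ∧
      (∀ ω, g ω ∈ Ω) ∧
      (∀ ω (q : ℕ) (p : Fin 2 → ℤ), 0 < q → rad ρ₀ R q < dist (g ω) (ratPt p q)) ∧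
      (∀ ω ω' n, (∀ k < n, ω k = ω' k) → ω n ≠ ω' n →
        4 * rho ρ₀ R (n+1) ≤ dist (g ω) (g ω')) := by
  classical
  have hRR := Rpos hR
  have h12 : (12:ℝ) ≤ (R:ℝ) := by exact_mod_cast hR
  obtain ⟨c₀, hc₀⟩ := hΩne
  have hnode := node_children Ω m δ a b r₀ ha hb hmΩ hAlow hAup hρ₀ hρ₀1 hρ₀r hR NN hNN
  -- choice of children
  set ch : ℕ → Pt → Fin NN → Pt :=
    fun n c i => if h : c ∈ Ω then (hnode n c h).choose i else c with hch
  have hch_mem : ∀ n c (h : c ∈ Ω) i, ch n c i ∈ Ω := by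
    intro n c h i
    rw [hch]; simp only [dif_pos h]
    exact (hnode n c h).choose_spec.1 i
  have hch_dist : ∀ n c (h : c ∈ Ω) i, dist (ch n c i) c ≤ rho ρ₀ R n / 2 := by
    intro n c h i
    rw [hch]; simp only [dif_pos h]
    exact (hnode n c h).choose_spec.2.1 i
  have hch_sep : ∀ n c (h : c ∈ Ω) i i', i ≠ i' →
      6 * rho ρ₀ R (n+1) ≤ dist (ch n c i) (ch n c i') := by
    intro n c h i i' hii
    rw [hch]; simp only [dif_pos h]
    exact (hnode n c h).choose_spec.2.2.1 i i' hii
  have hch_avoid : ∀ n c (h : c ∈ Ω) i (q : ℕ) (p : Fin 2 → ℤ), 0 < q → windowQ ρ₀ R n q →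
      rho ρ₀ R (n+1) + rad ρ₀ R q < dist (ch n c i) (ratPt p q) := by
    intro n c h i q p hq hw
    rw [hch]; simp only [dif_pos h]
    exact (hnode n c h).choose_spec.2.2.2 i q p hq hw
  -- the centre sequences
  set cs : (ℕ → Fin NN) → ℕ → Pt :=
    fun ω => Nat.rec c₀ (fun n cn => ch n cn (ω n)) with hcs
  have hcs0 : ∀ ω, cs ω 0 = c₀ := fun _ => rfl
  have hcsS : ∀ ω n, cs ω (n+1) = ch n (cs ω n) (ω n) := fun _ _ => rfl
  have hmem : ∀ ω n, cs ω n ∈ Ω := by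
    intro ω n
    induction n with
    | zero => exact hc₀
    | succ n ih => rw [hcsS]; exact hch_mem n _ ih _
  have hstep : ∀ ω n, dist (cs ω (n+1)) (cs ω n) ≤ rho ρ₀ R n / 2 := by
    intro ω n
    rw [hcsS]
    exact hch_dist n _ (hmem ω n) _
  have hfactor : ∀ ω ω' n, (∀ k < n, ω k = ω' k) → cs ω n = cs ω' n := by
    intro ω ω' n
    induction n with
    | zero => intro _; rfl
    | succ n ih =>
      intro h
      rw [hcsS, hcsS, ih (fun k hk => h k (by omega)), h n (by omega)]
  -- geometric Cauchy estimates
  have hgeom : ∀ ω n, dist (cs ω n) (cs ω (n+1)) ≤ (ρ₀/2) * (1/(R:ℝ))^n := by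
    intro ω n
    rw [dist_comm]
    calc dist (cs ω (n+1)) (cs ω n) ≤ rho ρ₀ R n / 2 := hstep ω n
      _ = (ρ₀/2) * (1/(R:ℝ))^n := by
          rw [rho]; rw [div_pow, one_pow]; ring
  have hrlt : 1/(R:ℝ) < 1 := by
    rw [div_lt_one hRR]; linarith
  have hcauchy : ∀ ω, CauchySeq (fun n => cs ω n) :=
    fun ω => cauchySeq_of_le_geometric (1/(R:ℝ)) (ρ₀/2) hrlt (hgeom ω)
  set g : (ℕ → Fin NN) → Pt :=
    fun ω => (cauchySeq_tendsto_of_complete (hcauchy ω)).choose with hg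
  have hgt : ∀ ω, Filter.Tendsto (fun n => cs ω n) Filter.atTop (nhds (g ω)) :=
    fun ω => (cauchySeq_tendsto_of_complete (hcauchy ω)).choose_spec
  have hgdist : ∀ ω n, dist (g ω) (cs ω n) ≤ rho ρ₀ R n := by
    intro ω n
    have h := dist_le_of_le_geometric_of_tendsto (1/(R:ℝ)) (ρ₀/2) hrlt (hgeom ω) (hgt ω) n
    rw [dist_comm]
    calc dist (cs ω n) (g ω) ≤ (ρ₀/2) * (1/(R:ℝ))^n / (1 - 1/(R:ℝ)) := h
      _ ≤ rho ρ₀ R n := by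
          have h1R : 1/(R:ℝ) ≤ 1/12 := by
            apply div_le_div_of_nonneg_left (by norm_num) (by norm_num) h12
          have hpos1 : (0:ℝ) < 1 - 1/(R:ℝ) := by linarith
          have hpow : (0:ℝ) < (R:ℝ)^n := by positivity
          have hprod : (1/(R:ℝ))^n * (R:ℝ)^n = 1 := by
            rw [← mul_pow, one_div_mul_cancel hRR.ne', one_pow]
          rw [rho, div_le_div_iff₀ hpos1 hpow]
          have hpp : (0:ℝ) < (1/(R:ℝ))^n := by positivity
          nlinarith [hρ₀, hpp, hprod]
  have hgΩ : ∀ ω, g ω ∈ Ω :=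
    fun ω => hΩclosed.mem_of_tendsto (hgt ω) (Filter.Eventually.of_forall (hmem ω))
  refine ⟨g, cs, hfactor, hgt, hgΩ, ?_, ?_⟩
  · -- avoidance
    intro ω q p hq
    obtain ⟨n, hw⟩ := exists_window hρ₀ hR hq
    have havoid := hch_avoid n (cs ω n) (hmem ω n) (ω n) q p hq hw
    rw [← hcsS] at havoid
    have hd := hgdist ω (n+1)
    have := dist_triangle (cs ω (n+1)) (g ω) (ratPt p q)
    rw [dist_comm (cs ω (n+1)) (g ω)] at this
    linarith
  · -- separation of limit points
    intro ω ω' n hagr hne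
    have hsep := hch_sep n (cs ω n) (hmem ω n) (ω n) (ω' n) hne
    have hfac : cs ω n = cs ω' n := hfactor ω ω' n hagr
    have h1 : dist (g ω) (cs ω (n+1)) ≤ rho ρ₀ R (n+1) := hgdist ω (n+1)
    have h2 : dist (g ω') (cs ω' (n+1)) ≤ rho ρ₀ R (n+1) := hgdist ω' (n+1)
    have hcc : 6 * rho ρ₀ R (n+1) ≤ dist (cs ω (n+1)) (cs ω' (n+1)) := by
      rw [hcsS, hcsS, ← hfac]
      exact hsep
    have htri : dist (cs ω (n+1)) (cs ω' (n+1)) ≤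
        dist (cs ω (n+1)) (g ω) + dist (g ω) (g ω') + dist (g ω') (cs ω' (n+1)) :=
      dist_triangle4 _ _ _ _
    rw [dist_comm (cs ω (n+1)) (g ω)] at htri
    have hpos := rho_pos hρ₀ hR (n+1)
    linarith
end CONSTR

section DIM

variable (Ω : Set Pt) (m : Measure Pt)
variable (δ a b r₀ : ℝ)

lemma cantor_dim
    (ha : 0 < a) (hb : 0 < b) (hmΩ : m Ωᶜ = 0)
    (hAlow : ∀ c ∈ Ω, ∀ r:ℝ, 0 < r → r ≤ r₀ → ENNReal.ofReal (a * r^δ) ≤ m (closedBall c r))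
    (hAup : ∀ c ∈ Ω, ∀ r:ℝ, 0 < r → r ≤ r₀ → m (closedBall c r) ≤ ENNReal.ofReal (b * r^δ))
    {ρ₀ : ℝ} {R : ℕ} (hρ₀ : 0 < ρ₀) (hρ₀1 : ρ₀ ≤ 1/2) (hρ₀r : 2*ρ₀ ≤ r₀) (hR : 12 ≤ R)
    (NN : ℕ) (hNN : (NN:ℝ) + (4*(R:ℝ)+3) ≤ (a/b) * ((R:ℝ)/12)^δ)
    (hΩclosed : IsClosed Ω) (hΩne : Ω.Nonempty)
    (s : ℝ) (hs1 : 1 ≤ s) (hsN : (R:ℝ)^s ≤ (NN:ℝ)) :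
    ∃ K : Set Pt, K.Nonempty ∧ K ⊆ Ω ∧
      (∀ x ∈ K, ∀ (q : ℕ) (p : Fin 2 → ℤ), 0 < q → rad ρ₀ R q < dist x (ratPt p q)) ∧
      ENNReal.ofReal s ≤ dimH K := by
  classical
  have hRR := Rpos hR
  have h12 : (12:ℝ) ≤ (R:ℝ) := by exact_mod_cast hR
  have hspos : 0 < s := by linarith
  have hNN0 : 0 < NN := by
    by_contra h
    push_neg at h
    interval_cases NN
    · have hp := Real.rpow_pos_of_pos hRR s
      simp at hsN
      linarith
  have hNN2 : (2:ℝ) ≤ (NN:ℝ) := by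
    have h1 : (12:ℝ)^s ≤ (R:ℝ)^s :=
      Real.rpow_le_rpow (by norm_num) h12 hspos.le
    have h2 : (12:ℝ)^(1:ℝ) ≤ (12:ℝ)^s :=
      Real.rpow_le_rpow_of_exponent_le (by norm_num) hs1
    rw [Real.rpow_one] at h2
    linarith
  obtain ⟨g, cs, hfactor, hgt, hgΩ, havoid, hgsep⟩ :=
    construction Ω m δ a b r₀ ha hb hmΩ hAlow hAup hρ₀ hρ₀1 hρ₀r hR NN hNN hΩclosed hΩne
  -- digit map into branch space
  set digs : ℝ → (ℕ → Fin NN) :=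
    fun u k => (⟨dig NN u k % NN, Nat.mod_lt _ hNN0⟩ : Fin NN) with hdigs
  have hdig_iff : ∀ u w k, digs u k = digs w k ↔ dig NN u k = dig NN w k := by
    intro u w k
    rw [hdigs]
    simp only [Fin.mk.injEq]
    rw [Nat.mod_eq_of_lt (dig_lt hNN0 u k), Nat.mod_eq_of_lt (dig_lt hNN0 w k)]
  set G : ℝ → Pt := fun u => g (digs u) with hG
  -- measurability of G
  have hGnmeas : ∀ n, Measurable (fun u => cs (digs u) n) := by
    intro n
    have hfac : (fun u => cs (digs u) n)
        = (fun σ : Fin n → Fin NN => cs (fun k => if h : k < n then σ ⟨k, h⟩ else ⟨0, hNN0⟩) n)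
          ∘ (fun u (i : Fin n) => digs u (i:ℕ)) := by
      funext u
      simp only [Function.comp_apply]
      apply hfactor
      intro k hk
      simp [hk]
    rw [hfac]
    apply (measurable_of_countable _).comp
    apply measurable_pi_lambda
    intro i
    have : Measurable (fun u => dig NN u (i:ℕ)) := measurable_dig NN (i:ℕ)
    exact (measurable_of_countable (fun d : ℕ => (⟨d % NN, Nat.mod_lt _ hNN0⟩ : Fin NN))).comp this
  have hGmeas : Measurable G := by
    apply measurable_of_tendsto_metrizable hGnmeas
    rw [tendsto_pi_nhds]
    intro u
    exact hgt (digs u)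
  -- the pushforward measure
  set ν : Measure ℝ := volume.restrict (Set.Ico (0:ℝ) 1) with hν
  set μ : Measure Pt := Measure.map G ν with hμ
  -- key cylinder estimate
  have key : ∀ (n : ℕ) (t : Set Pt), EMetric.diam t < ENNReal.ofReal (4*rho ρ₀ R (n+1)) →
      μ t ≤ ENNReal.ofReal (1/(NN:ℝ)^(n+1)) := by
    intro n t hdiam
    have hclos : μ t ≤ μ (closure t) := measure_mono subset_closure
    have hdiamc : EMetric.diam (closure t) < ENNReal.ofReal (4*rho ρ₀ R (n+1)) := by
      show Metric.ediam (closure t) < _; rw [Metric.ediam_closure]; exact hdiam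
    have hmap : μ (closure t) = volume (G ⁻¹' closure t ∩ Set.Ico (0:ℝ) 1) := by
      rw [hμ, Measure.map_apply hGmeas measurableSet_closure, hν,
        Measure.restrict_apply (hGmeas measurableSet_closure)]
    rcases Set.eq_empty_or_nonempty (G ⁻¹' closure t ∩ Set.Ico (0:ℝ) 1) with hemp | ⟨u₀, hu₀⟩
    · have hz : μ (closure t) = 0 := by rw [hmap, hemp]; simp
      calc μ t ≤ μ (closure t) := hclos
        _ = 0 := hz
        _ ≤ ENNReal.ofReal (1/(NN:ℝ)^(n+1)) := zero_le
    · -- all points have the same floor at level n+1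
      have hsame : ∀ v ∈ G ⁻¹' closure t ∩ Set.Ico (0:ℝ) 1,
          ⌊v * (NN:ℝ)^(n+1)⌋ = ⌊u₀ * (NN:ℝ)^(n+1)⌋ := by
        intro v hv
        have hdigeq : ∀ k < n+1, dig NN v k = dig NN u₀ k := by
          by_contra hcon
          push_neg at hcon
          obtain ⟨k₁, hk₁, hkne⟩ := hcon
          have hex : ∃ k, dig NN v k ≠ dig NN u₀ k := ⟨k₁, hkne⟩
          set j := Nat.find hex with hj
          have hjne : dig NN v j ≠ dig NN u₀ j := Nat.find_spec hex
          have hjle : j ≤ n := le_trans (Nat.find_min' hex hkne) (by omega)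
          have hagr : ∀ k < j, digs v k = digs u₀ k := by
            intro k hk
            rw [hdig_iff]
            by_contra hne
            exact absurd (Nat.find_min' hex hne) (by omega)
          have hFne : digs v j ≠ digs u₀ j := by
            rw [Ne, hdig_iff]; exact hjne
          have hsep := hgsep (digs v) (digs u₀) j hagr hFne
          have hvt : G v ∈ closure t := hv.1
          have hut : G u₀ ∈ closure t := hu₀.1
          have hedist : edist (G v) (G u₀) < ENNReal.ofReal (4*rho ρ₀ R (n+1)) :=
            lt_of_le_of_lt (EMetric.edist_le_diam_of_mem hvt hut) hdiamc
          have hdist : dist (G v) (G u₀) < 4*rho ρ₀ R (n+1) := by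
            rw [← edist_lt_ofReal]; exact hedist
          have hmono : rho ρ₀ R (n+1) ≤ rho ρ₀ R (j+1) := rho_anti hρ₀ hR (by omega)
          rw [hG] at hdist
          linarith
        exact floor_eq_of_digs hNN0 hv.2 hu₀.2 (n+1) hdigeq
      set J := ⌊u₀ * (NN:ℝ)^(n+1)⌋ with hJ
      have hsub : G ⁻¹' closure t ∩ Set.Ico (0:ℝ) 1 ⊆
          Set.Ico ((J:ℝ) / (NN:ℝ)^(n+1)) (((J:ℝ)+1) / (NN:ℝ)^(n+1)) := by
        intro v hv
        exact floor_fix_subset hNN0 (n+1) J ⟨hv.2, hsame v hv⟩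
      calc μ t ≤ μ (closure t) := hclos
        _ = volume (G ⁻¹' closure t ∩ Set.Ico (0:ℝ) 1) := hmap
        _ ≤ volume (Set.Ico ((J:ℝ) / (NN:ℝ)^(n+1)) (((J:ℝ)+1) / (NN:ℝ)^(n+1))) :=
            measure_mono hsub
        _ = ENNReal.ofReal (1/(NN:ℝ)^(n+1)) := by
            rw [Real.volume_Ico]
            congr 1
            have hNpow : (0:ℝ) < (NN:ℝ)^(n+1) := by positivity
            field_simp
            ring
    -- end key
  -- the mass distribution bound
  set Cm : ℝ≥0∞ := ENNReal.ofReal ((R:ℝ)^s / (4*ρ₀)^s) with hCm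
  have hCmpos : 0 < (R:ℝ)^s / (4*ρ₀)^s := by
    apply div_pos (Real.rpow_pos_of_pos hRR s) (Real.rpow_pos_of_pos (by linarith) s)
  have hCm0 : Cm ≠ 0 := by
    rw [hCm]
    simp only [ne_eq, ENNReal.ofReal_eq_zero, not_le]
    exact hCmpos
  have hCmtop : Cm ≠ ⊤ := ENNReal.ofReal_ne_top
  have hmass : ∀ t : Set Pt, EMetric.diam t ≤ ENNReal.ofReal (rho ρ₀ R 1) →
      μ t ≤ Cm * (EMetric.diam t) ^ s := by
    intro t hdiam
    have hdne : EMetric.diam t ≠ ⊤ := ne_top_of_le_ne_top ENNReal.ofReal_ne_top hdiam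
    rcases eq_or_ne (EMetric.diam t) 0 with hD0 | hDpos
    · -- zero diameter
      have hz : μ t = 0 := by
        have hle : ∀ n : ℕ, μ t ≤ ENNReal.ofReal (1/(NN:ℝ)^(n+1)) := by
          intro n
          apply key n t
          rw [hD0]
          simp only [ENNReal.ofReal_pos]
          linarith [rho_pos hρ₀ hR (n+1)]
        have htend : Filter.Tendsto (fun n : ℕ => ENNReal.ofReal (1/(NN:ℝ)^(n+1)))
            Filter.atTop (nhds 0) := by
          have : Filter.Tendsto (fun n : ℕ => (1/(NN:ℝ))^(n+1)) Filter.atTop (nhds 0) := by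
            have hr1 : (0:ℝ) ≤ 1/(NN:ℝ) := by positivity
            have hr2 : 1/(NN:ℝ) < 1 := by rw [div_lt_one (by linarith)]; linarith
            exact (tendsto_pow_atTop_nhds_zero_of_lt_one hr1 hr2).comp
              (Filter.tendsto_add_atTop_nat 1)
          have h2 := (ENNReal.continuous_ofReal.tendsto 0).comp this
          simpa [div_pow, Function.comp_def] using h2
        exact le_antisymm (ge_of_tendsto' htend hle |>.trans (by simp)) zero_le
      rw [hz]
      exact zero_le
    · -- positive diameter
      set D := (EMetric.diam t).toReal with hD
      have hDpos' : 0 < D := ENNReal.toReal_pos hDpos hdne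
      have hDle : D ≤ rho ρ₀ R 1 := by
        rw [hD]
        exact ENNReal.toReal_le_of_le_ofReal (le_of_lt (rho_pos hρ₀ hR 1)) hdiam
      have hXgt : (R:ℝ) < 4*ρ₀/D := by
        rw [lt_div_iff₀ hDpos']
        have : D * (R:ℝ) ≤ ρ₀ := by
          have h2 : rho ρ₀ R 1 * (R:ℝ) = ρ₀ := by
            rw [rho, pow_one]; field_simp
          calc D * (R:ℝ) ≤ rho ρ₀ R 1 * (R:ℝ) := by
                apply mul_le_mul_of_nonneg_right hDle hRR.le
            _ = ρ₀ := h2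
        nlinarith
      obtain ⟨n, hn1, hn2⟩ := exists_pow_window (le_trans (by norm_num) hR) hXgt
      have hpow1 : (0:ℝ) < (R:ℝ)^(n+1) := by positivity
      have hpow2 : (0:ℝ) < (R:ℝ)^(n+2) := by positivity
      have hDlt : D < 4*rho ρ₀ R (n+1) := by
        rw [rho]
        rw [lt_div_iff₀ hDpos'] at hn1
        rw [show 4*(ρ₀/(R:ℝ)^(n+1)) = 4*ρ₀/(R:ℝ)^(n+1) from by ring, lt_div_iff₀ hpow1]
        nlinarith
      have hDge : 4*rho ρ₀ R (n+2) ≤ D := by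
        rw [rho]
        rw [div_le_iff₀ hDpos'] at hn2
        rw [show 4*(ρ₀/(R:ℝ)^(n+2)) = 4*ρ₀/(R:ℝ)^(n+2) from by ring, div_le_iff₀ hpow2]
        nlinarith
      have hkey := key n t (by
        have : EMetric.diam t = ENNReal.ofReal D := (ENNReal.ofReal_toReal hdne).symm
        rw [this]
        exact (ENNReal.ofReal_lt_ofReal_iff (by linarith [rho_pos hρ₀ hR (n+1)])).2 hDlt)
      -- numeric comparison
      have hcomp : 1/(NN:ℝ)^(n+1) ≤ ((R:ℝ)^s / (4*ρ₀)^s) * D^s := by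
        have hRs : (0:ℝ) < (R:ℝ)^s := Real.rpow_pos_of_pos hRR s
        have e1 : (1:ℝ)/(NN:ℝ)^(n+1) ≤ 1/((R:ℝ)^s)^(n+1) := by
          have hp1 : (0:ℝ) < ((R:ℝ)^s)^(n+1) := by positivity
          have hp2 : ((R:ℝ)^s)^(n+1) ≤ (NN:ℝ)^(n+1) := pow_le_pow_left₀ (le_of_lt hRs) hsN (n+1)
          exact one_div_le_one_div_of_le hp1 hp2
        have e2 : ((R:ℝ)^s)^(n+1) = ((R:ℝ)^(n+1):ℝ)^s := by
          rw [← Real.rpow_natCast ((R:ℝ)^s) (n+1), ← Real.rpow_natCast (R:ℝ) (n+1),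
            ← Real.rpow_mul hRR.le, ← Real.rpow_mul hRR.le, mul_comm]
        have e3 : (4*rho ρ₀ R (n+2))^s ≤ D^s :=
          Real.rpow_le_rpow (by linarith [rho_pos hρ₀ hR (n+2)]) hDge hspos.le
        have e4 : (4*rho ρ₀ R (n+2))^s = (4*ρ₀)^s / (((R:ℝ)^(n+2):ℝ))^s := by
          rw [rho, ← Real.div_rpow (by linarith) (by positivity)]
          congr 1
          field_simp
        have e5 : (((R:ℝ)^(n+2):ℝ))^s = ((R:ℝ)^(n+1):ℝ)^s * (R:ℝ)^s := by
          rw [← Real.rpow_natCast (R:ℝ) (n+2), ← Real.rpow_natCast (R:ℝ) (n+1),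
            ← Real.rpow_mul hRR.le, ← Real.rpow_mul hRR.le, ← Real.rpow_add hRR]
          congr 1
          push_cast
          ring
        have hRn1s : (0:ℝ) < ((R:ℝ)^(n+1):ℝ)^s := Real.rpow_pos_of_pos hpow1 s
        have h4ρ : (0:ℝ) < (4*ρ₀)^s := Real.rpow_pos_of_pos (by linarith) s
        calc 1/(NN:ℝ)^(n+1) ≤ 1/((R:ℝ)^(n+1):ℝ)^s := by rw [← e2]; exact e1
          _ = ((R:ℝ)^s/(4*ρ₀)^s) * ((4*ρ₀)^s / (((R:ℝ)^(n+2):ℝ))^s) := by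
              rw [e5]; field_simp
          _ ≤ ((R:ℝ)^s/(4*ρ₀)^s) * D^s := by
              apply mul_le_mul_of_nonneg_left _ (by positivity)
              rw [← e4]; exact e3
      calc μ t ≤ ENNReal.ofReal (1/(NN:ℝ)^(n+1)) := hkey
        _ ≤ ENNReal.ofReal (((R:ℝ)^s / (4*ρ₀)^s) * D^s) := ENNReal.ofReal_le_ofReal hcomp
        _ = Cm * ENNReal.ofReal (D^s) := by
            rw [hCm, ENNReal.ofReal_mul (by positivity)]
        _ = Cm * (EMetric.diam t) ^ s := by
            congr 1
            rw [← ENNReal.ofReal_rpow_of_pos hDpos', ENNReal.ofReal_toReal hdne]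
  -- apply the mass distribution principle
  set μ' : Measure Pt := Cm⁻¹ • μ with hμ'
  have hμ'le : μ' ≤ μH[s] := by
    have hε : (0:ℝ≥0∞) < ENNReal.ofReal (rho ρ₀ R 1) := by
      rw [ENNReal.ofReal_pos]; exact rho_pos hρ₀ hR 1
    apply MeasureTheory.Measure.le_hausdorffMeasure s μ' (ENNReal.ofReal (rho ρ₀ R 1)) hε
    intro t ht
    rw [hμ']
    simp only [Measure.smul_apply, smul_eq_mul]
    calc Cm⁻¹ * μ t ≤ Cm⁻¹ * (Cm * (EMetric.diam t)^s) :=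
          mul_le_mul_of_nonneg_left (hmass t ht) zero_le
      _ = (EMetric.diam t)^s := by
          rw [← mul_assoc, ENNReal.inv_mul_cancel hCm0 hCmtop, one_mul]
  refine ⟨Set.range G, ⟨G 0, Set.mem_range_self 0⟩, ?_, ?_, ?_⟩
  · rintro x ⟨u, rfl⟩
    exact hgΩ (digs u)
  · rintro x ⟨u, rfl⟩ q p hq
    exact havoid (digs u) q p hq
  · -- dimension bound
    have hμK : 1 ≤ μ (Set.range G) := by
      have h1 := MeasureTheory.Measure.le_map_apply (μ := ν) hGmeas.aemeasurable (Set.range G)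
      have h2 : G ⁻¹' Set.range G = Set.univ := by
        ext u; simp [Set.mem_range_self]
      rw [h2] at h1
      have h3 : ν Set.univ = 1 := by
        rw [hν, Measure.restrict_apply_univ, Real.volume_Ico]
        norm_num
      rw [hμ, ← h3]
      exact h1
    have hμ'K : Cm⁻¹ ≤ μ' (Set.range G) := by
      rw [hμ']
      simp only [Measure.smul_apply, smul_eq_mul]
      calc Cm⁻¹ = Cm⁻¹ * 1 := (mul_one _).symm
        _ ≤ Cm⁻¹ * μ (Set.range G) := mul_le_mul_of_nonneg_left hμK zero_le
    have hH : μH[s] (Set.range G) ≠ 0 := by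
      intro h0
      have := (Measure.le_iff'.1 hμ'le) (Set.range G)
      rw [h0] at this
      have hc : Cm⁻¹ = 0 := le_antisymm (le_trans hμ'K this) zero_le
      rw [ENNReal.inv_eq_zero] at hc
      exact hCmtop hc
    have hcoe : ((s.toNNReal : ℝ≥0) : ℝ) = s := Real.coe_toNNReal s hspos.le
    have := le_dimH_of_hausdorffMeasure_ne_zero (d := s.toNNReal) (by rw [hcoe]; exact hH)
    rw [ENNReal.ofReal]
    exact this
end DIM

section BADHALF

lemma mem_badHalf {ρ₀ : ℝ} {R : ℕ} (hρ₀ : 0 < ρ₀) (hR : 12 ≤ R) (x : Pt)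
    (hx : ∀ (q : ℕ) (p : Fin 2 → ℤ), 0 < q → rad ρ₀ R q < dist x (ratPt p q)) :
    x ∈ badPair (1/2) (1/2) := by
  have hRR := Rpos hR
  set κ := ρ₀ / (R:ℝ)^3 with hκ
  have hκpos : 0 < κ := by rw [hκ]; positivity
  refine ⟨κ^2, by positivity, ?_⟩
  intro q hq
  have hq' : (0:ℝ) < q := by exact_mod_cast hq
  have hsq : 0 < Real.sqrt q := Real.sqrt_pos.2 hq'
  have hsqsq : Real.sqrt q * Real.sqrt q = (q:ℝ) := Real.mul_self_sqrt hq'.le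
  set p : Fin 2 → ℤ := fun k => round ((q:ℝ) * x k) with hp
  have h := hx q p hq
  have hradnn : 0 ≤ rad ρ₀ R q := (rad_pos hρ₀ hR hq).le
  have hex : ∃ k : Fin 2, rad ρ₀ R q < dist (x k) (ratPt p q k) := by
    by_contra hcon
    push_neg at hcon
    have := (dist_pi_le_iff hradnn).2 hcon
    linarith
  obtain ⟨k, hk⟩ := hex
  have hdistk : dist (x k) (ratPt p q k) = |(q:ℝ) * x k - ((p k):ℝ)| / q := by
    rw [Real.dist_eq, ratPt]
    rw [show x k - ((p k):ℝ)/q = ((q:ℝ) * x k - ((p k):ℝ))/q from by field_simp]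
    rw [abs_div, abs_of_pos hq']
  have hqrad : (q:ℝ) * rad ρ₀ R q = κ / Real.sqrt q := by
    rw [rad, hκ]
    field_simp
  have hgt : κ / Real.sqrt q < distToNearestInt ((q:ℝ) * x k) := by
    have h1 : (q:ℝ) * rad ρ₀ R q < |(q:ℝ) * x k - ((p k):ℝ)| := by
      rw [hdistk] at hk
      calc (q:ℝ) * rad ρ₀ R q < (q:ℝ) * (|(q:ℝ) * x k - ((p k):ℝ)| / q) :=
            mul_lt_mul_of_pos_left hk hq'
        _ = |(q:ℝ) * x k - ((p k):ℝ)| := by field_simp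
    rw [hqrad] at h1
    rw [distToNearestInt]
    simp only [hp] at h1
    exact h1
  have hsqr : κ^2 / (q:ℝ) < distToNearestInt ((q:ℝ) * x k) ^ ((1:ℝ)/(1/2)) := by
    rw [show ((1:ℝ)/(1/2)) = (((2:ℕ)):ℝ) from by norm_num, Real.rpow_natCast]
    have hlhs : κ^2/(q:ℝ) = (κ / Real.sqrt q)^2 := by
      rw [div_pow κ (Real.sqrt q), Real.sq_sqrt hq'.le]
    rw [hlhs]
    exact pow_lt_pow_left₀ hgt (by positivity) (by norm_num)
  fin_cases k
  · exact Or.inl ⟨by norm_num, hsqr⟩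
  · exact Or.inr ⟨by norm_num, hsqr⟩
end BADHALF

end BPVconstr


/-- Let `i, j > 0` with `i + j = 1`. If there exists a compact subset `Ω ⊆ Bad(i,j) ⊆ ℝ²`
(with the sup metric) supporting a non-atomic finite measure `m` satisfying condition (A) with
exponent `δ > 1`, then `dim (Bad(i,j) ∩ Bad(1/2,1/2)) ≥ δ`; in particular
`Bad(i,j) ∩ Bad(1/2,1/2) ≠ ∅`. -/
theorem dimH_badPair_inter_symmetric_ge (i j : ℝ) (hi : 0 < i) (hj : 0 < j) (hij : i + j = 1)
    (Ω : Set (Fin 2 → ℝ)) (hΩc : IsCompact Ω) (hΩsub : Ω ⊆ badPair i j)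
    (m : Measure (Fin 2 → ℝ)) [IsFiniteMeasure m] [NullSingletonClass m]
    (hm0 : m ≠ 0) (hmΩ : m Ωᶜ = 0)
    (δ a b r₀ : ℝ) (hδ : 1 < δ) (ha : 0 < a) (ha1 : a ≤ 1) (hb : 1 ≤ b) (hr₀ : 0 < r₀)
    (hA : ∀ c ∈ Ω, ∀ r : ℝ, 0 < r → r ≤ r₀ →
      ENNReal.ofReal (a * r ^ δ) ≤ m (closedBall c r) ∧
      m (closedBall c r) ≤ ENNReal.ofReal (b * r ^ δ)) :
    ENNReal.ofReal δ ≤ dimH (badPair i j ∩ badPair (1/2) (1/2)) ∧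
      (badPair i j ∩ badPair (1/2) (1/2)).Nonempty := by
  classical
  have hAlow : ∀ c ∈ Ω, ∀ r:ℝ, 0 < r → r ≤ r₀ →
      ENNReal.ofReal (a * r^δ) ≤ m (closedBall c r) :=
    fun c hc r h1 h2 => (hA c hc r h1 h2).1
  have hAup : ∀ c ∈ Ω, ∀ r:ℝ, 0 < r → r ≤ r₀ →
      m (closedBall c r) ≤ ENNReal.ofReal (b * r^δ) :=
    fun c hc r h1 h2 => (hA c hc r h1 h2).2
  have hbpos : (0:ℝ) < b := lt_of_lt_of_le one_pos hb
  have hΩclosed : IsClosed Ω := hΩc.isClosed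
  have hΩne : Ω.Nonempty := by
    rw [Set.nonempty_iff_ne_empty]
    intro h
    apply hm0
    have hcompl : Ωᶜ = Set.univ := by rw [h, Set.compl_empty]
    have h2 : m Set.univ = 0 := by rw [← hcompl]; exact hmΩ
    exact Measure.measure_univ_eq_zero.1 h2
  set ρ₀ := min (r₀/2) (1/2) with hρ₀def
  have hρ₀ : 0 < ρ₀ := lt_min (by linarith) (by norm_num)
  have hρ₀1 : ρ₀ ≤ 1/2 := min_le_right _ _
  have hρ₀r : 2*ρ₀ ≤ r₀ := by
    have := min_le_left (r₀/2) (1/2)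
    rw [← hρ₀def] at this
    linarith
  have main : ∀ s:ℝ, 1 ≤ s → s < δ →
      ENNReal.ofReal s ≤ dimH (badPair i j ∩ badPair (1/2) (1/2)) ∧
        (badPair i j ∩ badPair (1/2) (1/2)).Nonempty := by
    intro s hs1 hsδ
    have hae : 0 < δ - s := by linarith
    set C := 9 * (12:ℝ)^δ * (b/a) with hC
    have h12δ : (0:ℝ) < (12:ℝ)^δ := Real.rpow_pos_of_pos (by norm_num) δ
    have hCpos : 0 < C := by rw [hC]; positivity
    set x₀ := C ^ ((δ - s)⁻¹) with hx0
    have hx0nn : 0 ≤ x₀ := (Real.rpow_pos_of_pos hCpos _).le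
    set R := max 12 ⌈x₀⌉₊ with hRdef
    have hR : 12 ≤ R := le_max_left _ _
    have hRR := Rpos hR
    have hR1 : (1:ℝ) ≤ (R:ℝ) := by
      have : (12:ℝ) ≤ (R:ℝ) := by exact_mod_cast hR
      linarith
    have hRx : x₀ ≤ (R:ℝ) := by
      calc x₀ ≤ (⌈x₀⌉₊:ℝ) := Nat.le_ceil x₀
        _ ≤ (R:ℝ) := by exact_mod_cast le_max_right 12 ⌈x₀⌉₊
    have hRe : C ≤ (R:ℝ)^(δ-s) := by
      calc C = x₀^(δ-s) := by
            rw [hx0, ← Real.rpow_mul hCpos.le, inv_mul_cancel₀ hae.ne', Real.rpow_one]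
        _ ≤ (R:ℝ)^(δ-s) := Real.rpow_le_rpow hx0nn hRx hae.le
    set NN := ⌈(R:ℝ)^s⌉₊ with hNNdef
    have hRspos : (0:ℝ) < (R:ℝ)^s := Real.rpow_pos_of_pos hRR s
    have hsN : (R:ℝ)^s ≤ (NN:ℝ) := Nat.le_ceil _
    have hNNle : (NN:ℝ) ≤ (R:ℝ)^s + 1 := by
      rw [hNNdef]
      exact le_of_lt (Nat.ceil_lt_add_one hRspos.le)
    have hRs1 : (1:ℝ) ≤ (R:ℝ)^s := by
      calc (1:ℝ) = (R:ℝ)^(0:ℝ) := (Real.rpow_zero _).symm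
        _ ≤ (R:ℝ)^s := Real.rpow_le_rpow_of_exponent_le hR1 (by linarith)
    have hRleRs : (R:ℝ) ≤ (R:ℝ)^s := by
      calc (R:ℝ) = (R:ℝ)^(1:ℝ) := (Real.rpow_one _).symm
        _ ≤ (R:ℝ)^s := Real.rpow_le_rpow_of_exponent_le hR1 hs1
    have hNN : (NN:ℝ) + (4*(R:ℝ)+3) ≤ (a/b) * ((R:ℝ)/12)^δ := by
      have h1 : (a/b) * ((R:ℝ)/12)^δ = (a/b) * ((R:ℝ)^δ / 12^δ) := by
        rw [Real.div_rpow hRR.le (by norm_num)]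
      have h2 : (R:ℝ)^δ = (R:ℝ)^s * (R:ℝ)^(δ-s) := by
        rw [← Real.rpow_add hRR]
        congr 1
        ring
      have h3' : (R:ℝ)^s * C ≤ (R:ℝ)^δ := by
        rw [h2]
        exact mul_le_mul_of_nonneg_left hRe hRspos.le
      have h3 : (a/b) * (((R:ℝ)^s * C) / 12^δ) ≤ (a/b) * ((R:ℝ)^δ / 12^δ) := by
        apply mul_le_mul_of_nonneg_left _ (by positivity)
        exact (div_le_div_iff_of_pos_right h12δ).2 h3'
      have h4 : (a/b) * (((R:ℝ)^s * C) / 12^δ) = 9 * (R:ℝ)^s := by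
        rw [hC]
        field_simp
      have h5 : (NN:ℝ) + (4*(R:ℝ)+3) ≤ 9 * (R:ℝ)^s := by
        have e1 : 4*(R:ℝ) ≤ 4*(R:ℝ)^s := by linarith
        have e2 : (3:ℝ) ≤ 3*(R:ℝ)^s := by linarith
        linarith
      rw [h1]
      calc (NN:ℝ) + (4*(R:ℝ)+3) ≤ 9 * (R:ℝ)^s := h5
        _ = (a/b) * (((R:ℝ)^s * C) / 12^δ) := h4.symm
        _ ≤ (a/b) * ((R:ℝ)^δ / 12^δ) := h3
    obtain ⟨K, hKne, hKΩ, hKavoid, hKdim⟩ :=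
      cantor_dim Ω m δ a b r₀ ha hbpos hmΩ hAlow hAup hρ₀ hρ₀1 hρ₀r hR NN hNN
        hΩclosed hΩne s hs1 hsN
    have hKT : K ⊆ badPair i j ∩ badPair (1/2) (1/2) := by
      intro x hxK
      exact ⟨hΩsub (hKΩ hxK), mem_badHalf hρ₀ hR x (hKavoid x hxK)⟩
    exact ⟨le_trans hKdim (dimH_mono hKT), hKne.mono hKT⟩
  constructor
  · set f : ℕ → ℝ := fun n => δ - (δ-1)/(n+1) with hf
    have hfle : ∀ n, ENNReal.ofReal (f n) ≤ dimH (badPair i j ∩ badPair (1/2) (1/2)) := by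
      intro n
      have hn1 : (1:ℝ) ≤ (n:ℝ)+1 := by
        have := Nat.cast_nonneg (α := ℝ) n
        linarith
      refine (main (f n) ?_ ?_).1
      · have h1 : (δ-1)/((n:ℝ)+1) ≤ δ-1 := div_le_self (by linarith) hn1
        rw [hf]
        simp only
        push_cast
        linarith
      · have h2 : 0 < (δ-1)/((n:ℝ)+1) := div_pos (by linarith) (by linarith)
        rw [hf]
        simp only
        push_cast
        linarith
    have htend : Filter.Tendsto (fun n : ℕ => ENNReal.ofReal (f n)) Filter.atTop
        (nhds (ENNReal.ofReal δ)) := by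
      apply (ENNReal.continuous_ofReal.tendsto δ).comp
      have h0 : Filter.Tendsto (fun n:ℕ => (δ-1) * (1/((n:ℝ)+1))) Filter.atTop (nhds 0) := by
        have := tendsto_one_div_add_atTop_nhds_zero_nat (𝕜 := ℝ)
        have h2 := this.const_mul (δ-1)
        simpa using h2
      have h1 : Filter.Tendsto (fun n:ℕ => δ - (δ-1) * (1/((n:ℝ)+1))) Filter.atTop
          (nhds (δ - 0)) := Filter.Tendsto.const_sub δ h0
      rw [sub_zero] at h1
      have hfe : f = fun n:ℕ => δ - (δ-1) * (1/((n:ℝ)+1)) := by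
        funext n
        simp only [hf]
        ring
      rw [hfe]
      exact h1
    exact le_of_tendsto htend (Filter.Eventually.of_forall hfle)
  · exact (main 1 le_rfl hδ).2
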